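/- Tangent-line lower envelope of sine: for all x with |x| ≤ xᵐ where 0 < xᵐ < π, sin(x) ≥ cos(xᵐ/2)·(x + xᵐ/2) − sin(xᵐ/2). -/

import Mathlib

open Real Set

lemma sin_ge_cubic : ∀ u : ℝ, 0 ≤ u → u - u ^ 3 / 6 ≤ Real.sin u := by
  have hmono : Monotone (fun u : ℝ => Real.sin u - u + u ^ 3 / 6) := by
    apply monotone_of_hasDerivAt_nonneg (f' := fun u => Real.cos u - 1 + u ^ 2 / 2)
    · intro u
      have h1 : HasDerivAt (fun u : ℝ => Real.sin u) (Real.cos u) u := Real.hasDerivAt_sin u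
      have h2 : HasDerivAt (fun u : ℝ => u ^ 3 / 6) (u ^ 2 / 2) u := by
        have := (hasDerivAt_pow 3 u).div_const 6
        exact this.congr_deriv (by norm_num; ring)
      have := (h1.sub (hasDerivAt_id u)).add h2
      exact this
    · intro u
      have := Real.one_sub_sq_div_two_le_cos (x := u)
      simp only [Pi.zero_apply]
      linarith
  intro u hu
  have := hmono hu
  simp at this
  nlinarith [this]

lemma key_G : ∀ t : ℝ, 0 ≤ t → t ≤ Real.pi / 2 →
    0 ≤ Real.sin (2 * t) + Real.sin t - 3 * t * Real.cos t := by
  intro t ht0 ht1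
  have hpi : Real.pi ≤ 3.15 := by linarith [Real.pi_lt_d2]
  have htle : t ≤ 1.6 := by linarith
  have hc0 : 0 ≤ Real.cos t := Real.cos_nonneg_of_mem_Icc ⟨by linarith [Real.pi_pos], ht1⟩
  have hs : t - t ^ 3 / 6 ≤ Real.sin t := sin_ge_cubic t ht0
  have hq : t / 2 - (t / 2) ^ 3 / 6 ≤ Real.sin (t / 2) := sin_ge_cubic (t / 2) (by linarith)
  have ht2 : t ^ 2 ≤ 2.56 := by nlinarith
  have hq0 : (0:ℝ) ≤ t / 2 - (t / 2) ^ 3 / 6 := by nlinarith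
  have hcos_eq : Real.cos t = 1 - 2 * Real.sin (t / 2) ^ 2 := by
    have h2 : Real.cos (2 * (t / 2)) = 2 * Real.cos (t / 2) ^ 2 - 1 := Real.cos_two_mul (t / 2)
    have h3 : Real.sin (t / 2) ^ 2 + Real.cos (t / 2) ^ 2 = 1 := Real.sin_sq_add_cos_sq (t / 2)
    have : (2 : ℝ) * (t / 2) = t := by ring
    rw [this] at h2
    linarith
  have hsin2 : Real.sin (2 * t) = 2 * Real.sin t * Real.cos t := Real.sin_two_mul t
  -- upper bound on cos t
  have hcub : Real.cos t ≤ 1 - 2 * (t / 2 - (t / 2) ^ 3 / 6) ^ 2 := by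
    rw [hcos_eq]
    have : (t / 2 - (t / 2) ^ 3 / 6) ^ 2 ≤ Real.sin (t / 2) ^ 2 := by
      nlinarith
    linarith
  rw [hsin2]
  obtain ⟨p, hpdef⟩ : ∃ p : ℝ, p = t / 2 - t ^ 3 / 48 := ⟨_, rfl⟩
  have hpeq : t / 2 - (t / 2) ^ 3 / 6 = p := by rw [hpdef]; ring
  rw [hpeq] at hq hq0 hcub
  have h3 : 0 ≤ (Real.sin t - (t - t ^ 3 / 6)) * (2 * Real.cos t + 1) :=
    mul_nonneg (by linarith) (by linarith)
  have h4 : 0 ≤ t * (1 - 2 * p ^ 2 - Real.cos t) := mul_nonneg ht0 (by linarith)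
  have h5 : 0 ≤ t ^ 3 * (1 - 2 * p ^ 2 - Real.cos t) :=
    mul_nonneg (by positivity) (by linarith)
  have hpoly : 0 ≤ 2 * t * p ^ 2 + (2 / 3) * t ^ 3 * p ^ 2 - t ^ 3 / 2 := by
    rw [hpdef]
    have h7 : t ^ 5 * t ^ 2 ≤ t ^ 5 * 2.56 :=
      mul_le_mul_of_nonneg_left ht2 (pow_nonneg ht0 5)
    nlinarith [pow_nonneg ht0 9, pow_nonneg ht0 5, pow_nonneg ht0 7]
  linarith [h3, h4, h5, hpoly]

theorem stmt5 (xm x : ℝ) (h1 : 0 < xm) (h2 : xm < Real.pi) (h3 : |x| ≤ xm) :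
    Real.sin x ≥ Real.cos (xm / 2) * (x + xm / 2) - Real.sin (xm / 2) := by
  set c := xm / 2 with hc
  obtain ⟨hx1, hx2⟩ := abs_le.mp h3
  have hc0 : 0 < c := by positivity
  have hcpi : c < Real.pi / 2 := by rw [hc]; linarith
  -- h y = sin y - cos c * y
  set h : ℝ → ℝ := fun y => Real.sin y - Real.cos c * y with hh
  have hderiv : ∀ y : ℝ, HasDerivAt h (Real.cos y - Real.cos c) y := by
    intro y
    have := (Real.hasDerivAt_sin y).sub ((hasDerivAt_id y).const_mul (Real.cos c))
    exact this.congr_deriv (by ring)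
  have hgoal : Real.cos c * (x + c) - Real.sin c = h (-c) - h x + Real.sin x := by
    simp only [hh, Real.sin_neg]
    ring
  rw [ge_iff_le, hgoal]
  suffices hs : h (-c) ≤ h x by linarith
  have hcont : Continuous h := by
    simp only [hh]; continuity
  rcases le_or_gt x (-c) with hcase | hcase
  · -- x ∈ [-xm, -c], h antitone there
    have hanti : AntitoneOn h (Icc (-xm) (-c)) := by
      apply antitoneOn_of_hasDerivWithinAt_nonpos (convex_Icc _ _) hcont.continuousOn
        (f' := fun y => Real.cos y - Real.cos c)
      · intro y _; exact (hderiv y).hasDerivWithinAt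
      · intro y hy
        rw [interior_Icc] at hy
        have h5 : Real.cos (-y) ≤ Real.cos c :=
          Real.cos_le_cos_of_nonneg_of_le_pi hc0.le (by linarith [hy.1])
            (by linarith [hy.2])
        rw [Real.cos_neg] at h5
        linarith
    exact hanti ⟨hx1, hcase⟩ ⟨by linarith, le_refl _⟩ hcase
  · rcases le_or_gt x c with hcase2 | hcase2
    · -- x ∈ [-c, c], h monotone there
      have hmono : MonotoneOn h (Icc (-c) c) := by
        apply monotoneOn_of_hasDerivWithinAt_nonneg (convex_Icc _ _) hcont.continuousOn
          (f' := fun y => Real.cos y - Real.cos c)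
        · intro y _; exact (hderiv y).hasDerivWithinAt
        · intro y hy
          rw [interior_Icc] at hy
          have h5 : Real.cos c ≤ Real.cos |y| := by
            apply Real.cos_le_cos_of_nonneg_of_le_pi (abs_nonneg y) (by linarith)
            rw [abs_le]; exact ⟨hy.1.le, hy.2.le⟩
          rw [Real.cos_abs] at h5
          linarith
      exact hmono ⟨le_refl _, by linarith⟩ ⟨hcase.le, hcase2⟩ hcase.le
    · -- x ∈ [c, xm], h antitone there; then h x ≥ h xm ≥ h (-c)
      have hanti : AntitoneOn h (Icc c xm) := by
        apply antitoneOn_of_hasDerivWithinAt_nonpos (convex_Icc _ _) hcont.continuousOn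
          (f' := fun y => Real.cos y - Real.cos c)
        · intro y _; exact (hderiv y).hasDerivWithinAt
        · intro y hy
          rw [interior_Icc] at hy
          have h5 : Real.cos y ≤ Real.cos c :=
            le_of_lt (Real.cos_lt_cos_of_nonneg_of_le_pi hc0.le (by linarith [hy.2]) hy.1)
          linarith
      have hxm : h xm ≤ h x := hanti ⟨hcase2.le, hx2⟩ ⟨by linarith, le_refl _⟩ hx2
      have hG := key_G c hc0.le hcpi.le
      have hxm2 : xm = 2 * c := by rw [hc]; ring
      have : h (-c) ≤ h xm := by
        simp only [hh, Real.sin_neg, hxm2]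
        nlinarith [hG]
      linarith
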